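/- Let g : ℝ^{d1} × ℝ^{d2} → ℝ be differentiable with l̄-Lipschitz gradients. Fix x, m ∈ ℝ^{d1}, y, n ∈ ℝ^{d2}, α > 0, β > 0, and set x⁺ = x − αm, y⁺ = y + βn. Then g(x⁺, y⁺) ≥ g(x,y) + (β/2)‖∇_y g(x⁺, y)‖² − (α/2)‖∇_x g(x,y)‖² − (β/2)‖∇_y g(x⁺, y) − n‖² + (α/2)‖∇_x g(x,y) − m‖² + (β/2)(1 − l̄β)‖n‖² − (α/2)(1 + αl̄)‖m‖². -/

import Mathlib

open MeasureTheory Metric intervalIntegral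

local notation "⟪" x ", " y "⟫" => @inner ℝ _ _ x y

lemma descent_lemma {E : Type*} [NormedAddCommGroup E] [InnerProductSpace ℝ E]
    [CompleteSpace E]
    (f : E → ℝ) (hf : Differentiable ℝ f) (L : ℝ)
    (hlip : ∀ p q : E, ‖gradient f p - gradient f q‖ ≤ L * ‖p - q‖)
    (a v : E) :
    f (a + v) ≥ f a + ⟪gradient f a, v⟫ - L / 2 * ‖v‖ ^ 2 := by
  set φ : ℝ → E := fun t => a + t • v with hφ
  have hline : ∀ t : ℝ, HasDerivAt φ v t := fun t =>
    by simpa [hφ] using ((hasDerivAt_id t).smul_const v).const_add a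
  have hder : ∀ t : ℝ, HasDerivAt (fun t => f (φ t)) ⟪gradient f (φ t), v⟫ t := by
    intro t
    have h1 := (hf (φ t)).hasGradientAt.hasFDerivAt
    have := h1.comp_hasDerivAt t (hline t)
    simpa [InnerProductSpace.toDual_apply_apply, Function.comp_def] using this
  have hgradlip : LipschitzWith (L * ‖v‖).toNNReal (fun t : ℝ => gradient f (φ t)) := by
    apply LipschitzWith.of_dist_le_mul
    intro s t
    rw [dist_eq_norm, dist_eq_norm]
    calc ‖gradient f (φ s) - gradient f (φ t)‖ ≤ L * ‖φ s - φ t‖ := hlip _ _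
      _ = L * ‖v‖ * ‖s - t‖ := by
          rw [hφ]; simp only [add_sub_add_left_eq_sub, ← sub_smul, norm_smul,
            Real.norm_eq_abs]; ring
      _ ≤ (L * ‖v‖).toNNReal * ‖s - t‖ := by
          gcongr; exact Real.le_coe_toNNReal _
  have hcont : Continuous (fun t : ℝ => ⟪gradient f (φ t), v⟫) :=
    (hgradlip.continuous).inner continuous_const
  have hint : f (a + v) - f a = ∫ t in (0:ℝ)..1, ⟪gradient f (φ t), v⟫ := by
    have := intervalIntegral.integral_eq_sub_of_hasDerivAt
      (f := fun t => f (φ t)) (a := 0) (b := 1)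
      (fun t _ => hder t) (hcont.intervalIntegrable 0 1)
    rw [this, hφ]; simp
  have key : f (a + v) - f a - ⟪gradient f a, v⟫
      = ∫ t in (0:ℝ)..1, (⟪gradient f (φ t), v⟫ - ⟪gradient f a, v⟫) := by
    rw [intervalIntegral.integral_sub (hcont.intervalIntegrable 0 1)
      (intervalIntegrable_const), intervalIntegral.integral_const, ← hint]
    simp
  have hbound : ∀ t ∈ Set.Icc (0:ℝ) 1,
      |⟪gradient f (φ t), v⟫ - ⟪gradient f a, v⟫| ≤ L * ‖v‖ ^ 2 * t := by
    intro t ht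
    have h1 : ⟪gradient f (φ t), v⟫ - ⟪gradient f a, v⟫
        = ⟪gradient f (φ t) - gradient f a, v⟫ := by rw [inner_sub_left]
    rw [h1]
    calc |⟪gradient f (φ t) - gradient f a, v⟫|
        ≤ ‖gradient f (φ t) - gradient f a‖ * ‖v‖ := abs_real_inner_le_norm _ _
      _ ≤ L * ‖φ t - a‖ * ‖v‖ := by gcongr; exact hlip _ _
      _ = L * ‖v‖ ^ 2 * t := by
          rw [hφ]; simp only [add_sub_cancel_left, norm_smul, Real.norm_eq_abs,
            abs_of_nonneg ht.1]; ring
  have habs : |f (a + v) - f a - ⟪gradient f a, v⟫| ≤ L / 2 * ‖v‖ ^ 2 := by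
    rw [key]
    calc |∫ t in (0:ℝ)..1, (⟪gradient f (φ t), v⟫ - ⟪gradient f a, v⟫)|
        ≤ ∫ t in (0:ℝ)..1, |⟪gradient f (φ t), v⟫ - ⟪gradient f a, v⟫| :=
          intervalIntegral.abs_integral_le_integral_abs (by norm_num)
      _ ≤ ∫ t in (0:ℝ)..1, L * ‖v‖ ^ 2 * t := by
          apply intervalIntegral.integral_mono_on (by norm_num)
          · exact (hcont.sub continuous_const).abs.intervalIntegrable 0 1
          · exact (continuous_const.mul continuous_id).intervalIntegrable 0 1
          · exact hbound
      _ = L / 2 * ‖v‖ ^ 2 := by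
          rw [intervalIntegral.integral_const_mul, integral_id]; ring
  have := abs_le.mp habs
  linarith [this.1]

/-- Gradient of `g` with respect to the first block of variables. -/
noncomputable def gradx {d1 d2 : ℕ}
    (g : EuclideanSpace ℝ (Fin d1) → EuclideanSpace ℝ (Fin d2) → ℝ)
    (x : EuclideanSpace ℝ (Fin d1)) (y : EuclideanSpace ℝ (Fin d2)) :
    EuclideanSpace ℝ (Fin d1) :=
  gradient (fun x' => g x' y) x

/-- Gradient of `g` with respect to the second block of variables. -/
noncomputable def grady {d1 d2 : ℕ}
    (g : EuclideanSpace ℝ (Fin d1) → EuclideanSpace ℝ (Fin d2) → ℝ)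
    (x : EuclideanSpace ℝ (Fin d1)) (y : EuclideanSpace ℝ (Fin d2)) :
    EuclideanSpace ℝ (Fin d2) :=
  gradient (fun y' => g x y') y

/-- One-iteration inequality for an alternating inexact descent-ascent step
`x⁺ = x − αm`, `y⁺ = y + βn`, for `g` with `l̄`-Lipschitz gradients. -/
theorem alternating_step_inequality {d1 d2 : ℕ}
    (g : EuclideanSpace ℝ (Fin d1) → EuclideanSpace ℝ (Fin d2) → ℝ) (lb : ℝ)
    (hdiff : Differentiable ℝ (fun p : EuclideanSpace ℝ (Fin d1) × EuclideanSpace ℝ (Fin d2) =>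
      g p.1 p.2))
    (hlipx : ∀ x1 y1 x2 y2, ‖gradx g x1 y1 - gradx g x2 y2‖ ≤ lb * (‖x1 - x2‖ + ‖y1 - y2‖))
    (hlipy : ∀ x1 y1 x2 y2, ‖grady g x1 y1 - grady g x2 y2‖ ≤ lb * (‖x1 - x2‖ + ‖y1 - y2‖))
    (x m : EuclideanSpace ℝ (Fin d1)) (y n : EuclideanSpace ℝ (Fin d2)) (α β : ℝ)
    (hα : 0 < α) (hβ : 0 < β) :
    g (x - α • m) (y + β • n) ≥
      g x y + β / 2 * ‖grady g (x - α • m) y‖ ^ 2 - α / 2 * ‖gradx g x y‖ ^ 2 -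
        β / 2 * ‖grady g (x - α • m) y - n‖ ^ 2 + α / 2 * ‖gradx g x y - m‖ ^ 2 +
        β / 2 * (1 - lb * β) * ‖n‖ ^ 2 - α / 2 * (1 + α * lb) * ‖m‖ ^ 2 := by
  have hdx : ∀ y', Differentiable ℝ (fun x' => g x' y') := fun y' =>
    hdiff.comp (differentiable_id.prodMk (differentiable_const y'))
  have hdy : ∀ x', Differentiable ℝ (fun y' => g x' y') := fun x' =>
    hdiff.comp ((differentiable_const x').prodMk differentiable_id)
  -- descent step in x
  have h1 := descent_lemma (fun x' => g x' y) (hdx y) lb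
    (fun p q => by simpa [gradx] using hlipx p y q y) x (-(α • m))
  -- ascent step in y
  have h2 := descent_lemma (fun y' => g (x - α • m) y') (hdy (x - α • m)) lb
    (fun p q => by simpa [grady] using hlipy (x - α • m) p (x - α • m) q) y (β • n)
  have e1 : x + -(α • m) = x - α • m := by abel
  rw [e1] at h1
  have hg1 : gradient (fun x' => g x' y) x = gradx g x y := rfl
  have hg2 : gradient (fun y' => g (x - α • m) y') y = grady g (x - α • m) y := rfl
  rw [hg1] at h1; rw [hg2] at h2
  have i1 : ⟪gradx g x y, -(α • m)⟫ = -(α * ⟪gradx g x y, m⟫) := by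
    rw [inner_neg_right, real_inner_smul_right]
  have i2 : ⟪grady g (x - α • m) y, β • n⟫ = β * ⟪grady g (x - α • m) y, n⟫ := by
    rw [real_inner_smul_right]
  have n1 : ‖-(α • m)‖ ^ 2 = α ^ 2 * ‖m‖ ^ 2 := by
    rw [norm_neg, norm_smul, Real.norm_eq_abs, mul_pow, sq_abs]
  have n2 : ‖β • n‖ ^ 2 = β ^ 2 * ‖n‖ ^ 2 := by
    rw [norm_smul, Real.norm_eq_abs, mul_pow, sq_abs]
  rw [i1, n1] at h1; rw [i2, n2] at h2
  have s1 := norm_sub_sq_real (gradx g x y) m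
  have s2 := norm_sub_sq_real (grady g (x - α • m) y) n
  nlinarith [h1, h2, s1, s2]
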